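/- Let A be a nondeterministic finite automaton on finite words over Σ = {a, b}, let Ā be its dual (a universal automaton on finite words accepting the complement of L(A)), and let B be the alternating finite-word automaton that, from its initial state, after the first letter lets Eve guess the second letter via a disjunction: if the actual second letter differs from the guess, B proceeds to a rejecting sink ⊥, and otherwise it proceeds to the initial state of Ā. Then B is ∃GFG if and only if L(A) = Σ*. -/

import Mathlib

set_option autoImplicit false
set_option linter.unusedVariables false

/-! ### Positive Boolean formulas -/

inductive PosBool (Q : Type) : Type
  | atom : Q → PosBool Q
  | and : PosBool Q → PosBool Q → PosBool Q
  | or : PosBool Q → PosBool Q → PosBool Q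

namespace PosBool

variable {Q : Type}

/-- The possible outcomes of Eve resolving all the disjunctions of a positive
Boolean formula: each element of `eveRes φ` is the set of atoms that Adam can
reach (by resolving the conjunctions) against that fixed resolution of Eve.
These are exactly the `q`-boxes of the one-step game over the formula `φ`. -/
def eveRes : PosBool Q → Set (Set Q)
  | atom q => {{q}}
  | and f g => {s | ∃ u ∈ eveRes f, ∃ v ∈ eveRes g, s = u ∪ v}
  | or f g => eveRes f ∪ eveRes g

/-- The dual formula: swap disjunctions and conjunctions. -/
def dual : PosBool Q → PosBool Q
  | atom q => atom q
  | and f g => or (dual f) (dual g)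
  | or f g => and (dual f) (dual g)

/-- Length (number of nodes) of a formula. -/
def size : PosBool Q → ℕ
  | atom _ => 1
  | and f g => size f + size g + 1
  | or f g => size f + size g + 1

/-- Atoms occurring in a formula. -/
def atoms : PosBool Q → Set Q
  | atom q => {q}
  | and f g => atoms f ∪ atoms g
  | or f g => atoms f ∪ atoms g

/-- A purely conjunctive formula (no disjunctions). -/
def NoOr : PosBool Q → Prop
  | atom _ => True
  | and f g => NoOr f ∧ NoOr g
  | or _ _ => False

/-- A purely disjunctive formula (no conjunctions). -/
def NoAnd : PosBool Q → Prop
  | atom _ => True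
  | and _ _ => False
  | or f g => NoAnd f ∧ NoAnd g

/-- Disjunctive normal form: a disjunction of conjunctions. -/
def IsDNF : PosBool Q → Prop
  | or f g => IsDNF f ∧ IsDNF g
  | φ => NoOr φ

end PosBool

/-! ### Acceptance conditions -/

/-- `c` appears infinitely often in `f`. -/
def InfOften (f : ℕ → ℕ) (c : ℕ) : Prop := ∀ n, ∃ m, n ≤ m ∧ f m = c

/-- The parity condition: the highest value appearing infinitely often is even. -/
def ParityAccept (f : ℕ → ℕ) : Prop :=
  ∃ c, Even c ∧ InfOften f c ∧ ∀ d, InfOften f d → d ≤ c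

/-- The sequence `ρ` visits the set `S` infinitely often. -/
def InfOftenIn {T : Type} (ρ : ℕ → T) (S : Set T) : Prop := ∀ n, ∃ m, n ≤ m ∧ ρ m ∈ S

/-- A Rabin (or Streett) pair of sets of transitions. -/
structure RabinPair (T : Type) where
  bad : Set T
  good : Set T

/-- The Rabin condition for pairs `⟨B_i, G_i⟩`, `i < k`: for some `i`,
`inf(ρ) ∩ B_i = ∅` and `inf(ρ) ∩ G_i ≠ ∅`. -/
def RabinAccept {T : Type} {k : ℕ} (pairs : Fin k → RabinPair T) (ρ : ℕ → T) : Prop :=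
  ∃ i, ¬ InfOftenIn ρ (pairs i).bad ∧ InfOftenIn ρ (pairs i).good

/-- The Streett condition for pairs `⟨B_i, G_i⟩`, `i < k`: for every `i`,
`inf(ρ) ∩ B_i = ∅` or `inf(ρ) ∩ G_i ≠ ∅`. -/
def StreettAccept {T : Type} {k : ℕ} (pairs : Fin k → RabinPair T) (ρ : ℕ → T) : Prop :=
  ∀ i, ¬ InfOftenIn ρ (pairs i).bad ∨ InfOftenIn ρ (pairs i).good

/-! ### Generic two-player games of infinite duration.

A game proceeds in rounds; in each round, from the current game state, up to
six moves are played in alternation: Adam moves first (`a1`), then Eve (`e1`),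
then Adam (`a2`), then Eve (`e2`), then Adam (`a3`), then Eve (`e3`).
(Unused phases are modelled by the type `Unit`.)  Strategies may use the full
history of the play (the list of previous complete rounds) as well as the moves
already played in the current round.  Eve wins an infinite play iff the
sequence of rounds satisfies the winning condition `win`. -/

structure GameRound (St α1 β1 α2 β2 α3 β3 : Type) where
  st : St
  a1 : α1
  e1 : β1
  a2 : α2
  e2 : β2
  a3 : α3
  e3 : β3

structure Game (St α1 β1 α2 β2 α3 β3 : Type) where
  init : St
  A1 : St → Set α1
  E1 : St → α1 → Set β1
  A2 : St → α1 → β1 → Set α2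
  E2 : St → α1 → β1 → α2 → Set β2
  A3 : St → α1 → β1 → α2 → β2 → Set α3
  E3 : St → α1 → β1 → α2 → β2 → α3 → Set β3
  next : St → α1 → β1 → α2 → β2 → α3 → β3 → St
  win : (ℕ → GameRound St α1 β1 α2 β2 α3 β3) → Prop

namespace Game

variable {St α1 β1 α2 β2 α3 β3 : Type}

/-- The states along the play are correctly updated. -/
def StateOk (G : Game St α1 β1 α2 β2 α3 β3) (ρ : ℕ → GameRound St α1 β1 α2 β2 α3 β3) : Prop :=
  (ρ 0).st = G.init ∧
  ∀ n, (ρ (n+1)).st = G.next (ρ n).st (ρ n).a1 (ρ n).e1 (ρ n).a2 (ρ n).e2 (ρ n).a3 (ρ n).e3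

/-- Round `n` of the play is entirely legal. -/
def RoundLegal (G : Game St α1 β1 α2 β2 α3 β3) (ρ : ℕ → GameRound St α1 β1 α2 β2 α3 β3)
    (n : ℕ) : Prop :=
  (ρ n).a1 ∈ G.A1 (ρ n).st ∧
  (ρ n).e1 ∈ G.E1 (ρ n).st (ρ n).a1 ∧
  (ρ n).a2 ∈ G.A2 (ρ n).st (ρ n).a1 (ρ n).e1 ∧
  (ρ n).e2 ∈ G.E2 (ρ n).st (ρ n).a1 (ρ n).e1 (ρ n).a2 ∧
  (ρ n).a3 ∈ G.A3 (ρ n).st (ρ n).a1 (ρ n).e1 (ρ n).a2 (ρ n).e2 ∧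
  (ρ n).e3 ∈ G.E3 (ρ n).st (ρ n).a1 (ρ n).e1 (ρ n).a2 (ρ n).e2 (ρ n).a3

/-- All rounds before round `n` are entirely legal. -/
def Hleg (G : Game St α1 β1 α2 β2 α3 β3) (ρ : ℕ → GameRound St α1 β1 α2 β2 α3 β3)
    (n : ℕ) : Prop :=
  ∀ m, m < n → RoundLegal G ρ m

/-- Eve wins the play `ρ`: she is never the first player to make an illegal
move (the moves of each round are ordered `a1, e1, a2, e2, a3, e3`), and if all
moves are legal then the play satisfies the winning condition. -/
def EveWinsPlay (G : Game St α1 β1 α2 β2 α3 β3)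
    (ρ : ℕ → GameRound St α1 β1 α2 β2 α3 β3) : Prop :=
  (∀ n, Hleg G ρ n → (ρ n).a1 ∈ G.A1 (ρ n).st →
      (ρ n).e1 ∈ G.E1 (ρ n).st (ρ n).a1) ∧
  (∀ n, Hleg G ρ n → (ρ n).a1 ∈ G.A1 (ρ n).st →
      (ρ n).e1 ∈ G.E1 (ρ n).st (ρ n).a1 →
      (ρ n).a2 ∈ G.A2 (ρ n).st (ρ n).a1 (ρ n).e1 →
      (ρ n).e2 ∈ G.E2 (ρ n).st (ρ n).a1 (ρ n).e1 (ρ n).a2) ∧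
  (∀ n, Hleg G ρ n → (ρ n).a1 ∈ G.A1 (ρ n).st →
      (ρ n).e1 ∈ G.E1 (ρ n).st (ρ n).a1 →
      (ρ n).a2 ∈ G.A2 (ρ n).st (ρ n).a1 (ρ n).e1 →
      (ρ n).e2 ∈ G.E2 (ρ n).st (ρ n).a1 (ρ n).e1 (ρ n).a2 →
      (ρ n).a3 ∈ G.A3 (ρ n).st (ρ n).a1 (ρ n).e1 (ρ n).a2 (ρ n).e2 →
      (ρ n).e3 ∈ G.E3 (ρ n).st (ρ n).a1 (ρ n).e1 (ρ n).a2 (ρ n).e2 (ρ n).a3) ∧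
  ((∀ n, RoundLegal G ρ n) → G.win ρ)

/-- Adam wins the play `ρ`: he is never the first player to make an illegal
move, and if all moves are legal then the play violates the (Eve) winning
condition. -/
def AdamWinsPlay (G : Game St α1 β1 α2 β2 α3 β3)
    (ρ : ℕ → GameRound St α1 β1 α2 β2 α3 β3) : Prop :=
  (∀ n, Hleg G ρ n → (ρ n).a1 ∈ G.A1 (ρ n).st) ∧
  (∀ n, Hleg G ρ n → (ρ n).a1 ∈ G.A1 (ρ n).st →
      (ρ n).e1 ∈ G.E1 (ρ n).st (ρ n).a1 →
      (ρ n).a2 ∈ G.A2 (ρ n).st (ρ n).a1 (ρ n).e1) ∧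
  (∀ n, Hleg G ρ n → (ρ n).a1 ∈ G.A1 (ρ n).st →
      (ρ n).e1 ∈ G.E1 (ρ n).st (ρ n).a1 →
      (ρ n).a2 ∈ G.A2 (ρ n).st (ρ n).a1 (ρ n).e1 →
      (ρ n).e2 ∈ G.E2 (ρ n).st (ρ n).a1 (ρ n).e1 (ρ n).a2 →
      (ρ n).a3 ∈ G.A3 (ρ n).st (ρ n).a1 (ρ n).e1 (ρ n).a2 (ρ n).e2) ∧
  ((∀ n, RoundLegal G ρ n) → ¬ G.win ρ)

/-- The history of a play before round `n`: the list of the first `n` rounds. -/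
def hist (ρ : ℕ → GameRound St α1 β1 α2 β2 α3 β3) (n : ℕ) : List (GameRound St α1 β1 α2 β2 α3 β3) :=
  (List.range n).map ρ

/-- A strategy of Eve: for each of her three moves in a round, a choice
depending on the history, the current state, and the moves already played
in the current round. -/
structure EStrat (St α1 β1 α2 β2 α3 β3 : Type) where
  f1 : List (GameRound St α1 β1 α2 β2 α3 β3) → St → α1 → β1
  f2 : List (GameRound St α1 β1 α2 β2 α3 β3) → St → α1 → β1 → α2 → β2
  f3 : List (GameRound St α1 β1 α2 β2 α3 β3) → St → α1 → β1 → α2 → β2 → α3 → β3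

/-- A strategy of Adam. -/
structure AStrat (St α1 β1 α2 β2 α3 β3 : Type) where
  g1 : List (GameRound St α1 β1 α2 β2 α3 β3) → St → α1
  g2 : List (GameRound St α1 β1 α2 β2 α3 β3) → St → α1 → β1 → α2
  g3 : List (GameRound St α1 β1 α2 β2 α3 β3) → St → α1 → β1 → α2 → β2 → α3

/-- The play `ρ` is consistent with the strategy `σ` of Eve. -/
def ConsE (σ : EStrat St α1 β1 α2 β2 α3 β3) (ρ : ℕ → GameRound St α1 β1 α2 β2 α3 β3) : Prop :=
  ∀ n, (ρ n).e1 = σ.f1 (hist ρ n) (ρ n).st (ρ n).a1 ∧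
       (ρ n).e2 = σ.f2 (hist ρ n) (ρ n).st (ρ n).a1 (ρ n).e1 (ρ n).a2 ∧
       (ρ n).e3 = σ.f3 (hist ρ n) (ρ n).st (ρ n).a1 (ρ n).e1 (ρ n).a2 (ρ n).e2 (ρ n).a3

/-- The play `ρ` is consistent with the strategy `τ` of Adam. -/
def ConsA (τ : AStrat St α1 β1 α2 β2 α3 β3) (ρ : ℕ → GameRound St α1 β1 α2 β2 α3 β3) : Prop :=
  ∀ n, (ρ n).a1 = τ.g1 (hist ρ n) (ρ n).st ∧
       (ρ n).a2 = τ.g2 (hist ρ n) (ρ n).st (ρ n).a1 (ρ n).e1 ∧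
       (ρ n).a3 = τ.g3 (hist ρ n) (ρ n).st (ρ n).a1 (ρ n).e1 (ρ n).a2 (ρ n).e2

/-- `σ` is a winning strategy for Eve: every play consistent with `σ` is won
by Eve. -/
def EveWinningStrat (G : Game St α1 β1 α2 β2 α3 β3) (σ : EStrat St α1 β1 α2 β2 α3 β3) : Prop :=
  ∀ ρ, StateOk G ρ → ConsE σ ρ → EveWinsPlay G ρ

/-- Eve wins the game `G`. -/
def EveWins (G : Game St α1 β1 α2 β2 α3 β3) : Prop := ∃ σ, EveWinningStrat G σ

/-- `τ` is a winning strategy for Adam: every play consistent with `τ` is won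
by Adam. -/
def AdamWinningStrat (G : Game St α1 β1 α2 β2 α3 β3) (τ : AStrat St α1 β1 α2 β2 α3 β3) : Prop :=
  ∀ ρ, StateOk G ρ → ConsA τ ρ → AdamWinsPlay G ρ

/-- Adam wins the game `G`. -/
def AdamWins (G : Game St α1 β1 α2 β2 α3 β3) : Prop := ∃ τ, AdamWinningStrat G τ

end Game

/-! ### Finite-word automata -/

namespace PosBool

/-- Satisfaction of a positive Boolean formula under a valuation. -/
def sat {Q : Type} (v : Q → Prop) : PosBool Q → Prop
  | atom q => v q
  | and f g => sat v f ∧ sat v g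
  | or f g => sat v f ∨ sat v g

end PosBool

/-- An alternating automaton on finite words. -/
structure AFA (A : Type) where
  Q : Type
  init : Q
  delta : Q → A → PosBool Q
  F : Set Q

namespace AFA

variable {A : Type}

/-- Acceptance of a finite word from a state: at the end of the word, accept
iff the current state is accepting; otherwise Eve resolves the disjunctions and
Adam the conjunctions of the one-step formula. -/
def AccFrom (M : AFA A) : M.Q → List A → Prop
  | q, [] => q ∈ M.F
  | q, x :: u => PosBool.sat (fun q' => M.AccFrom q' u) (M.delta q x)

/-- The language of `M`. -/
def Lang (M : AFA A) : Set (List A) := {u | M.AccFrom M.init u}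

/-- Eve's letter game on an alternating finite-word automaton: Adam picks
letters (and may stop at any point), the players resolve the one-step formulas
(Eve the disjunctions, Adam the conjunctions); Eve wins iff at every point, the
finite word produced so far is not in `L(M)` or the current state is
accepting. -/
def eLetterGame (M : AFA A) : Game M.Q A (Set M.Q) M.Q Unit Unit Unit where
  init := M.init
  A1 _ := Set.univ
  E1 q a := PosBool.eveRes (M.delta q a)
  A2 _ _ S := S
  E2 _ _ _ _ := Set.univ
  A3 _ _ _ _ _ := Set.univ
  E3 _ _ _ _ _ _ := Set.univ
  next _ _ _ q' _ _ _ := q'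
  win ρ := ∀ n, ((List.range n).map fun i => (ρ i).a1) ∈ M.Lang → (ρ n).st ∈ M.F

/-- `M` is ∃GFG. -/
def ExistsGFG (M : AFA A) : Prop := Game.EveWins M.eLetterGame

end AFA

/-- A nondeterministic finite automaton on finite words (with transitions given
by lists, so that the dual universal automaton has well-defined conjunctive
transition formulas). -/
structure NFAf (A : Type) where
  Q : Type
  init : Q
  delta : Q → A → List Q
  F : Set Q

namespace NFAf

variable {A : Type}

/-- Nondeterministic acceptance from a state. -/
def nAcc (N : NFAf A) : N.Q → List A → Prop
  | q, [] => q ∈ N.F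
  | q, x :: u => ∃ q' ∈ N.delta q x, N.nAcc q' u

end NFAf

/-! ### Statement 17

Let `A` be an NFA on finite words over `Σ = {a, b}` (modelled by `Bool`), let
`Ā` be its dual (a universal automaton accepting the complement of `L(A)`),
and let `B` be the alternating finite-word automaton that, from its initial
state, after the first letter lets Eve guess the second letter via a
disjunction: if the actual second letter differs from the guess, `B` proceeds
to a rejecting sink `⊥`, and otherwise it proceeds to the initial state of
`Ā`.  Then `B` is ∃GFG iff `L(A) = Σ*`. -/

/-- The states of `B`: the initial state, the two guess states, the rejecting
sink, an accepting sink `top` (used to represent the empty conjunction when a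
state of `Ā` has no successors), and the states of `Ā` (which are those of
`A`). -/
inductive BSt (Q : Type) : Type
  | start : BSt Q
  | guess : Bool → BSt Q
  | sink : BSt Q
  | top : BSt Q
  | inU : Q → BSt Q

/-- The conjunction of a finite list of states of `Ā` (the accepting sink `top`
for the empty conjunction). -/
def conjAtoms {Q : Type} : List Q → PosBool (BSt Q)
  | [] => .atom .top
  | [q] => .atom (.inU q)
  | q :: qs => .and (.atom (.inU q)) (conjAtoms qs)

/-- The alternating finite-word automaton `B` built from NFA `N`: the `inU`
part is the dual `Ā` of `N` (conjunctive transitions, complemented accepting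
states), and the initial part lets Eve guess the second letter. -/
def mkB (N : NFAf Bool) : AFA Bool where
  Q := BSt N.Q
  init := .start
  delta s x :=
    match s with
    | .start => .or (.atom (.guess true)) (.atom (.guess false))
    | .guess c => .atom (if x = c then .inU N.init else .sink)
    | .sink => .atom .sink
    | .top => .atom .top
    | .inU q => conjAtoms (N.delta q x)
  F := {s | s = .top ∨ ∃ q, s = BSt.inU q ∧ q ∉ N.F}

/-! ### Auxiliary lemmas -/

namespace PosBool

theorem eveRes_nonempty {Q : Type} (φ : PosBool Q) : ∃ S, S ∈ φ.eveRes := by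
  induction φ with
  | atom q => exact ⟨{q}, rfl⟩
  | and f g hf hg =>
    obtain ⟨s, hs⟩ := hf; obtain ⟨t, ht⟩ := hg
    exact ⟨s ∪ t, s, hs, t, ht, rfl⟩
  | or f g hf hg =>
    obtain ⟨s, hs⟩ := hf; exact ⟨s, Or.inl hs⟩

theorem eveRes_mem_nonempty {Q : Type} {φ : PosBool Q} {S : Set Q}
    (h : S ∈ φ.eveRes) : ∃ q, q ∈ S := by
  induction φ generalizing S with
  | atom q => rw [show S = {q} from h]; exact ⟨q, rfl⟩
  | and f g hf hg =>
    obtain ⟨s, hs, t, ht, rfl⟩ := h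
    obtain ⟨q, hq⟩ := hf hs
    exact ⟨q, Or.inl hq⟩
  | or f g hf hg =>
    cases h with
    | inl h => exact hf h
    | inr h => exact hg h

end PosBool

theorem acc_top (N : NFAf Bool) : ∀ u : List Bool, (mkB N).AccFrom .top u := by
  intro u
  induction u with
  | nil => exact Or.inl rfl
  | cons x u ih => exact ih

theorem acc_sink (N : NFAf Bool) : ∀ u : List Bool, ¬ (mkB N).AccFrom .sink u := by
  intro u
  induction u with
  | nil =>
    rintro (h | ⟨q, h, _⟩) <;> exact absurd h (by simp)
  | cons x u ih => exact ih

theorem conjAtoms_sat {Q : Type} (v : BSt Q → Prop) (hv : v .top) :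
    ∀ l : List Q, PosBool.sat v (conjAtoms l) ↔ ∀ q ∈ l, v (.inU q) := by
  intro l
  induction l with
  | nil => simpa [conjAtoms, PosBool.sat] using hv
  | cons q qs ih =>
    cases qs with
    | nil => simp [conjAtoms, PosBool.sat]
    | cons r rs => simp_all [conjAtoms, PosBool.sat]

theorem acc_inU (N : NFAf Bool) : ∀ (u : List Bool) (q : N.Q),
    (mkB N).AccFrom (.inU q) u ↔ ¬ N.nAcc q u := by
  intro u
  induction u with
  | nil =>
    intro q
    show ((.inU q : BSt N.Q) = .top ∨ ∃ q', BSt.inU q = BSt.inU q' ∧ q' ∉ N.F) ↔ ¬ q ∈ N.F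
    simp [NFAf.nAcc]
  | cons x u ih =>
    intro q
    show PosBool.sat (fun q' => (mkB N).AccFrom q' u) (conjAtoms (N.delta q x)) ↔ _
    refine (conjAtoms_sat (fun q' : BSt N.Q => (mkB N).AccFrom q' u) (acc_top N u) (N.delta q x)).trans ?_
    simp [NFAf.nAcc, ih]

theorem lang_mkB (N : NFAf Bool) (w : List Bool) :
    w ∈ (mkB N).Lang ↔ ∃ x y v, w = x :: y :: v ∧ ¬ N.nAcc N.init v := by
  match w with
  | [] =>
    simp only [AFA.Lang, Set.mem_setOf_eq, AFA.AccFrom]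
    simp [mkB]
    rintro (h | ⟨q, h, _⟩) <;> cases h
  | [x] =>
    simp only [AFA.Lang, Set.mem_setOf_eq]
    show ((mkB N).AccFrom (.guess true) [] ∨ (mkB N).AccFrom (.guess false) []) ↔ _
    simp [AFA.AccFrom, mkB]
    constructor <;> rintro (h | ⟨q, h, _⟩) <;> cases h
  | x :: y :: v =>
    have hg : ∀ c : Bool, (mkB N).AccFrom (.guess c) (y :: v) ↔
        (y = c ∧ ¬ N.nAcc N.init v) := by
      intro c
      show (mkB N).AccFrom (if y = c then .inU N.init else .sink) v ↔ _
      by_cases h : y = c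
      · simp [h, acc_inU]
      · simp [h, acc_sink]
    show ((mkB N).AccFrom (.guess true) (y :: v) ∨ (mkB N).AccFrom (.guess false) (y :: v)) ↔ _
    rw [hg, hg]
    constructor
    · rintro (⟨_, h⟩ | ⟨_, h⟩) <;> exact ⟨x, y, v, rfl, h⟩
    · rintro ⟨x', y', v', he, hn⟩
      injection he with h1 h2; injection h2 with h2 h3
      subst h2; subst h3
      cases y
      · exact Or.inr ⟨rfl, hn⟩
      · exact Or.inl ⟨rfl, hn⟩

/-! ### The easy direction -/

theorem easy_dir (N : NFAf Bool) (h : ∀ u, N.nAcc N.init u) : (mkB N).ExistsGFG := by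
  classical
  refine ⟨⟨fun l st a => (PosBool.eveRes_nonempty ((mkB N).delta st a)).choose,
          fun _ _ _ _ _ => (), fun _ _ _ _ _ _ _ => ()⟩, ?_⟩
  intro ρ hst hcons
  refine ⟨?_, ?_, ?_, ?_⟩
  · intro n _ _
    rw [(hcons n).1]
    exact (PosBool.eveRes_nonempty _).choose_spec
  · intro n _ _ _ _; exact Set.mem_univ _
  · intro n _ _ _ _ _ _; exact Set.mem_univ _
  · intro _ n hw
    obtain ⟨x, y, v, _, hv⟩ := (lang_mkB N _).1 hw
    exact absurd (h v) hv

/-! ### The hard direction: infrastructure -/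

open Classical in
noncomputable def pick {Q : Type} (S : Set (BSt Q)) : BSt Q :=
  if h : ∃ q, q ∈ S then h.choose else .sink

theorem pick_mem {Q : Type} {S : Set (BSt Q)} (h : ∃ q, q ∈ S) : pick S ∈ S := by
  rw [pick, dif_pos h]; exact h.choose_spec

/-- Adam's letter choices: `true`, then the negation of Eve's guess, then the
letters of `u`. -/
def adamLetter (u : List Bool) (n : ℕ) {Q : Type} (st : BSt Q) : Bool :=
  match n, st with
  | 0, _ => true
  | 1, .guess c => !c
  | 1, _ => true
  | n+2, _ => u.getD n true

abbrev BR (N : NFAf Bool) : Type :=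
  GameRound (BSt N.Q) Bool (Set (BSt N.Q)) (BSt N.Q) Unit Unit Unit

abbrev BStrat (N : NFAf Bool) : Type :=
  Game.EStrat (BSt N.Q) Bool (Set (BSt N.Q)) (BSt N.Q) Unit Unit Unit

def stepSt {N : NFAf Bool} (l : List (BR N)) : BSt N.Q :=
  (l.getLast?.map (fun r => r.a2)).getD .start

noncomputable def step (N : NFAf Bool) (σ : BStrat N) (u : List Bool)
    (l : List (BR N)) : BR N :=
  { st := stepSt l
    a1 := adamLetter u l.length (stepSt l)
    e1 := σ.f1 l (stepSt l) (adamLetter u l.length (stepSt l))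
    a2 := pick (σ.f1 l (stepSt l) (adamLetter u l.length (stepSt l)))
    e2 := ()
    a3 := ()
    e3 := () }

noncomputable def hseq (N : NFAf Bool) (σ : BStrat N) (u : List Bool) : ℕ → List (BR N)
  | 0 => []
  | n+1 => hseq N σ u n ++ [step N σ u (hseq N σ u n)]

noncomputable def play (N : NFAf Bool) (σ : BStrat N) (u : List Bool) (n : ℕ) : BR N :=
  step N σ u (hseq N σ u n)

theorem hseq_length (N : NFAf Bool) (σ : BStrat N) (u : List Bool) :
    ∀ n, (hseq N σ u n).length = n := by
  intro n
  induction n with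
  | zero => rfl
  | succ n ih => simp [hseq, ih]

theorem hist_play (N : NFAf Bool) (σ : BStrat N) (u : List Bool) :
    ∀ n, Game.hist (play N σ u) n = hseq N σ u n := by
  intro n
  induction n with
  | zero => rfl
  | succ n ih =>
    rw [Game.hist, List.range_succ, List.map_append, ← Game.hist, ih]
    rfl

theorem play_st_succ (N : NFAf Bool) (σ : BStrat N) (u : List Bool) (n : ℕ) :
    (play N σ u (n+1)).st = (play N σ u n).a2 := by
  show stepSt (hseq N σ u (n+1)) = _
  rw [show hseq N σ u (n+1) = hseq N σ u n ++ [play N σ u n] from rfl]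
  simp [stepSt]

theorem play_a1 (N : NFAf Bool) (σ : BStrat N) (u : List Bool) (n : ℕ) :
    (play N σ u n).a1 = adamLetter u n ((play N σ u n).st) := by
  show adamLetter u (hseq N σ u n).length _ = _
  rw [hseq_length]
  rfl

theorem play_stateOk (N : NFAf Bool) (σ : BStrat N) (u : List Bool) :
    Game.StateOk ((mkB N).eLetterGame) (play N σ u) :=
  ⟨rfl, fun n => play_st_succ N σ u n⟩

theorem play_consE (N : NFAf Bool) (σ : BStrat N) (u : List Bool) :
    Game.ConsE σ (play N σ u) := by
  intro n
  rw [hist_play]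
  exact ⟨rfl, rfl, rfl⟩

theorem hard_dir (N : NFAf Bool) (hg : (mkB N).ExistsGFG) : ∀ u, N.nAcc N.init u := by
  intro u
  by_contra hu
  obtain ⟨(σ : BStrat N), hσ⟩ := hg
  have hEW := hσ (play N σ u) (play_stateOk N σ u) (play_consE N σ u)
  -- all rounds are legal
  have hleg : ∀ n, Game.RoundLegal ((mkB N).eLetterGame) (play N σ u) n := by
    intro n
    induction n using Nat.strong_induction_on with
    | _ n ih =>
      have hH : Game.Hleg ((mkB N).eLetterGame) (play N σ u) n := fun m hm => ih m hm
      have he1 := hEW.1 n hH (Set.mem_univ _)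
      have he1' : (play N σ u n).e1 ∈
          PosBool.eveRes ((mkB N).delta (play N σ u n).st (play N σ u n).a1) := he1
      have ha2 : (play N σ u n).a2 ∈ (play N σ u n).e1 :=
        pick_mem (PosBool.eveRes_mem_nonempty he1')
      exact ⟨Set.mem_univ _, he1, ha2, Set.mem_univ _, Set.mem_univ _, Set.mem_univ _⟩
  have hwin : ∀ n, ((List.range n).map fun i => (play N σ u i).a1) ∈ (mkB N).Lang →
      (play N σ u n).st ∈ (mkB N).F := hEW.2.2.2 hleg
  -- round 0: Eve guesses c
  obtain ⟨c, hc⟩ : ∃ c, (play N σ u 0).a2 = .guess c := by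
    have he1 : (play N σ u 0).e1 ∈
        PosBool.eveRes ((mkB N).delta (play N σ u 0).st (play N σ u 0).a1) := (hleg 0).2.1
    have ha2 : (play N σ u 0).a2 ∈ (play N σ u 0).e1 := (hleg 0).2.2.1
    have he1'' : (play N σ u 0).e1 = {BSt.guess true} ∨
        (play N σ u 0).e1 = {BSt.guess false} := he1
    cases he1'' with
    | inl h => exact ⟨true, by rw [h] at ha2; exact ha2⟩
    | inr h => exact ⟨false, by rw [h] at ha2; exact ha2⟩
  have st1 : (play N σ u 1).st = .guess c := by rw [play_st_succ]; exact hc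
  have a11 : (play N σ u 1).a1 = !c := by rw [play_a1, st1]; rfl
  -- round 1: the state moves to the sink
  have st2 : (play N σ u 2).st = .sink := by
    have he1 : (play N σ u 1).e1 ∈
        PosBool.eveRes ((mkB N).delta (play N σ u 1).st (play N σ u 1).a1) := (hleg 1).2.1
    have ha2 : (play N σ u 1).a2 ∈ (play N σ u 1).e1 := (hleg 1).2.2.1
    rw [st1, a11] at he1
    have hif : ((!c) = c) = False := by simp
    have he1'' : (play N σ u 1).e1 = {BSt.sink} := by cases c <;> exact he1
    rw [he1''] at ha2
    rw [play_st_succ]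
    exact ha2
  -- the state remains the sink forever
  have hsink : ∀ k, (play N σ u (k+2)).st = .sink := by
    intro k
    induction k with
    | zero => exact st2
    | succ k ih =>
      have he1 : (play N σ u (k+2)).e1 ∈
          PosBool.eveRes ((mkB N).delta (play N σ u (k+2)).st (play N σ u (k+2)).a1) :=
        (hleg (k+2)).2.1
      have ha2 : (play N σ u (k+2)).a2 ∈ (play N σ u (k+2)).e1 := (hleg (k+2)).2.2.1
      rw [ih] at he1
      have he1'' : (play N σ u (k+2)).e1 = {BSt.sink} := he1
      rw [he1''] at ha2
      show (play N σ u ((k+2)+1)).st = _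
      rw [play_st_succ]
      exact ha2
  -- the word played is true :: !c :: u
  have hw : ((List.range (u.length + 2)).map fun i => (play N σ u i).a1) = true :: (!c) :: u := by
    apply List.ext_getElem
    · simp
    · intro i h1 h2
      simp only [List.getElem_map, List.getElem_range]
      rcases i with _ | _ | k
      · rw [play_a1]; rfl
      · rw [play_a1, st1]; rfl
      · have hk : k < u.length := by simp at h1; omega
        show (play N σ u (k+2)).a1 = u[k]
        rw [play_a1, hsink k]
        show u.getD k true = u[k]
        rw [List.getD_eq_getElem u true hk]
  -- contradiction via the winning condition
  have hmem : ((List.range (u.length + 2)).map fun i => (play N σ u i).a1) ∈ (mkB N).Lang :=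
    (lang_mkB N _).2 ⟨true, (!c), u, hw, hu⟩
  have hF := hwin (u.length + 2) hmem
  rw [hsink u.length] at hF
  rcases hF with h | ⟨q, h, _⟩ <;> simp [mkB] at h


theorem mkB_existsGFG_iff_universal (N : NFAf Bool) [Finite N.Q] :
    (mkB N).ExistsGFG ↔ ∀ u : List Bool, N.nAcc N.init u :=
  ⟨hard_dir N, easy_dir N⟩
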